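/- Consider the 2×2 matrix over ℂ × ℂ given by A = ![![(1,1), (2,2)], ![(1,0), (0,0)]] (representing the bicomplex matrix [[1, 2], [e₁, 0]]). Then the rows of A are linearly independent over ℂ and the columns of A are linearly independent over ℂ, yet det A is a non-unit of ℂ × ℂ (indeed det A = (−2, 0)); hence a square bicomplex matrix with singular determinant can have linearly independent rows and columns. -/

import Mathlib

open Matrix

theorem singular_det_with_linearIndependent_rows_and_columns_example :
    let A : Matrix (Fin 2) (Fin 2) (ℂ × ℂ) :=
      ![![((1:ℂ), (1:ℂ)), ((2:ℂ), (2:ℂ))],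
        ![((1:ℂ), (0:ℂ)), ((0:ℂ), (0:ℂ))]]
    LinearIndependent ℂ (fun i => A i) ∧
    LinearIndependent ℂ (fun j => Aᵀ j) ∧
    ¬ IsUnit A.det ∧
    A.det = ((-2 : ℂ), (0 : ℂ)) := by
  intro A
  have hdet : A.det = ((-2 : ℂ), (0 : ℂ)) := by
    rw [Matrix.det_fin_two]
    simp [A, Matrix.det_fin_two, Prod.ext_iff]
  refine ⟨?_, ?_, ?_, hdet⟩
  · rw [linearIndependent_fin2]
    constructor
    · intro h
      have := congrFun h 0
      simp [A, Prod.ext_iff] at this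
    · intro a h
      have := congrFun h 0
      simp [A, Prod.ext_iff] at this
  · rw [linearIndependent_fin2]
    constructor
    · intro h
      have := congrFun h 0
      simp [A, Matrix.transpose, Prod.ext_iff] at this
    · intro a h
      have := congrFun h 1
      simp [A, Matrix.transpose, Prod.ext_iff] at this
  · intro h
    rw [hdet] at h
    have := h.map (RingHom.snd ℂ ℂ)
    simp at this
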